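/- Let a : ℕ → ℝ with a(0) = 1 and let r ≥ 1. Define d_n := ∑_{k=r}^{n} C(k,r) (-1)^{n-k} a(n-k)/(n-k)! for n ≥ r (so that D^{(r,a)}_n = n! * d_n). Then for all n ≥ r: ∑_{l=r}^{n} C(l-1,r-1) * (∑_{m=0}^{n-l} (-1)^m a(m)/m!) = ∑_{k=r}^{n} C(k,r) (-1)^{n-k} a(n-k)/(n-k)!. -/
import Mathlib

lemma hockey (r N : ℕ) (hr : 1 ≤ r) (hN : r ≤ N) :
    ∑ l ∈ Finset.Icc r N, ((l - 1).choose (r - 1)) = N.choose r := by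
  have h := Nat.sum_Icc_choose (N - 1) (r - 1)
  rw [Nat.sub_add_cancel hr, Nat.sub_add_cancel (hr.trans hN)] at h
  rw [← h]
  refine Finset.sum_nbij' (fun l => l - 1) (fun i => i + 1) ?_ ?_ ?_ ?_ ?_ <;>
    intro x hx <;> simp only [Finset.mem_Icc] at hx ⊢ <;> omega

theorem stmt_15 (a : ℕ → ℝ) (ha : a 0 = 1) (r : ℕ) (hr : 1 ≤ r)
    (n : ℕ) (hn : r ≤ n) :
    ∑ l ∈ Finset.Icc r n, ((l - 1).choose (r - 1) : ℝ) *
        (∑ m ∈ Finset.range (n - l + 1), (-1 : ℝ) ^ m * a m / m.factorial) =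
      ∑ k ∈ Finset.Icc r n,
        (k.choose r : ℝ) * (-1 : ℝ) ^ (n - k) * a (n - k) / (n - k).factorial := by
  set t : ℕ → ℝ := fun m => (-1 : ℝ) ^ m * a m / m.factorial with ht
  calc ∑ l ∈ Finset.Icc r n, ((l - 1).choose (r - 1) : ℝ) *
        (∑ m ∈ Finset.range (n - l + 1), t m)
      = ∑ l ∈ Finset.Icc r n, ∑ m ∈ Finset.range (n - r + 1),
          (if m ≤ n - l then ((l - 1).choose (r - 1) : ℝ) * t m else 0) := by
        refine Finset.sum_congr rfl fun l hl => ?_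
        simp only [Finset.mem_Icc] at hl
        have hsub : Finset.range (n - l + 1) ⊆ Finset.range (n - r + 1) := by
          intro x hx
          simp only [Finset.mem_range] at hx ⊢
          omega
        rw [Finset.mul_sum,
          ← Finset.sum_subset hsub (fun x hx hnx => by
            simp only [Finset.mem_range] at hx hnx
            exact if_neg (by omega))]
        refine Finset.sum_congr rfl fun m hm => ?_
        simp only [Finset.mem_range] at hm
        rw [if_pos (by omega)]
    _ = ∑ m ∈ Finset.range (n - r + 1), ∑ l ∈ Finset.Icc r n,
          (if m ≤ n - l then ((l - 1).choose (r - 1) : ℝ) * t m else 0) :=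
        Finset.sum_comm
    _ = ∑ m ∈ Finset.range (n - r + 1), ((n - m).choose r : ℝ) * t m := by
        refine Finset.sum_congr rfl fun m hm => ?_
        simp only [Finset.mem_range] at hm
        rw [← Finset.sum_filter, ← Finset.sum_mul]
        have hf : (Finset.Icc r n).filter (fun l => m ≤ n - l) = Finset.Icc r (n - m) := by
          ext l
          simp only [Finset.mem_filter, Finset.mem_Icc]
          omega
        rw [hf]
        congr 1
        rw [← Nat.cast_sum, hockey r (n - m) hr (by omega)]
    _ = ∑ k ∈ Finset.Icc r n,
        (k.choose r : ℝ) * (-1 : ℝ) ^ (n - k) * a (n - k) / (n - k).factorial := by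
        refine Finset.sum_nbij' (fun m => n - m) (fun k => n - k) ?_ ?_ ?_ ?_ ?_ <;>
          intro x hx <;>
          simp only [Finset.mem_range, Finset.mem_Icc] at hx ⊢
        · omega
        · omega
        · omega
        · omega
        · have h1 : n - (n - x) = x := by omega
          rw [h1, ht]; ring
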